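/- Let α, β : [0,1] → S¹ be continuous with α(0) = β(0), α(1) = β(1), wn(α·β⁻¹) = 0, and suppose that for every t ∈ [0,1] with α(t) = β(t), the loop α|_{[0,t]}·(β|_{[0,t]})⁻¹ has winding number 0. Then there exists a continuous path γ : [0,1] → S¹ with γ(t) ∉ {α(t), β(t)} for all t ∈ [0,1]. -/

import Mathlib

open Set

lemma exp_ne_of_between (x y : ℝ) (h1 : 0 < x - y) (h2 : x - y < 2 * Real.pi) :
    Complex.exp (x * Complex.I) ≠ Complex.exp (y * Complex.I) := by
  intro h
  have h' : Complex.exp (((x - y : ℝ) : ℂ) * Complex.I) = 1 := by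
    rw [Complex.ofReal_sub, sub_mul, Complex.exp_sub, h, div_self (Complex.exp_ne_zero _)]
  rw [Complex.exp_eq_one_iff] at h'
  obtain ⟨n, hn⟩ := h'
  have him : (x - y : ℝ) = n * (2 * Real.pi) := by
    have := congrArg Complex.im hn
    simpa using this
  have hπ := Real.pi_pos
  have hn0 : (0:ℝ) < n := by nlinarith
  have hn1 : (n:ℝ) < 1 := by nlinarith
  have hn0' : (0:ℤ) < n := by exact_mod_cast hn0
  have hn1' : n < 1 := by exact_mod_cast hn1
  omega

/-- One-dimensional evasion on the circle: if the two moving sensor points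
`α t, β t ∈ S¹` (with liftings `a, b`, starting and ending together, with the
total loop `α·β⁻¹` having winding number `0`, and every partial loop at a
meeting time having winding number `0`), then there is a continuously moving
evader `γ : [0,1] → S¹` avoiding both sensors at all times. -/
theorem stmt16 (α β : ℝ → ℂ) (a b : ℝ → ℝ)
    (ha : ContinuousOn a (Icc 0 1)) (hb : ContinuousOn b (Icc 0 1))
    (hα : ∀ t ∈ Icc (0:ℝ) 1, α t = Complex.exp (a t * Complex.I))
    (hβ : ∀ t ∈ Icc (0:ℝ) 1, β t = Complex.exp (b t * Complex.I))
    (h0 : a 0 = b 0) (h1 : a 1 = b 1)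
    (hpartial : ∀ t ∈ Icc (0:ℝ) 1, (∃ k : ℤ, a t - b t = 2 * Real.pi * k) → a t = b t) :
    ∃ γ : ℝ → ℂ, ContinuousOn γ (Icc 0 1) ∧
      ∀ t ∈ Icc (0:ℝ) 1, ‖γ t‖ = 1 ∧ γ t ≠ α t ∧ γ t ≠ β t := by
  have hπ := Real.pi_pos
  have key : ∀ t ∈ Icc (0:ℝ) 1, |a t - b t| < 2 * Real.pi := by
    intro t ht
    by_contra h
    push_neg at h
    set f : ℝ → ℝ := fun s => a s - b s with hf_def
    have hf : ContinuousOn f (Icc 0 1) := ha.sub hb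
    have hsub : Icc (0:ℝ) t ⊆ Icc 0 1 := Icc_subset_Icc le_rfl ht.2
    have hf' : ContinuousOn f (Icc 0 t) := hf.mono hsub
    have hf0 : f 0 = 0 := by simp [hf_def, h0]
    have hft : f t = a t - b t := rfl
    rcases le_abs.mp h with hc | hc
    · -- f t ≥ 2π, so f hits 2π somewhere on [0,t]
      have := intermediate_value_Icc ht.1 hf'
      have hmem : (2 * Real.pi) ∈ Icc (f 0) (f t) := by
        rw [hf0, hft]; constructor <;> linarith
      obtain ⟨s, hs, hfs⟩ := this hmem
      have hs1 : s ∈ Icc (0:ℝ) 1 := hsub hs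
      have hfs' : a s - b s = 2 * Real.pi := hfs
      have := hpartial s hs1 ⟨1, by push_cast; linarith⟩
      linarith [this ▸ hfs']
    · -- f t ≤ -2π
      have := intermediate_value_Icc' ht.1 hf'
      have hmem : (-(2 * Real.pi)) ∈ Icc (f t) (f 0) := by
        rw [hf0, hft]; constructor <;> linarith
      obtain ⟨s, hs, hfs⟩ := this hmem
      have hs1 : s ∈ Icc (0:ℝ) 1 := hsub hs
      have hfs' : a s - b s = -(2 * Real.pi) := hfs
      have := hpartial s hs1 ⟨-1, by push_cast; linarith⟩
      linarith [this ▸ hfs']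
  refine ⟨fun t => Complex.exp ((((a t + b t) / 2 + Real.pi : ℝ) : ℂ) * Complex.I),
    ?_, ?_⟩
  · apply Complex.continuous_exp.comp_continuousOn
    exact (Complex.continuous_ofReal.comp_continuousOn
      (((ha.add hb).div_const 2).add continuousOn_const)).mul continuousOn_const
  · intro t ht
    obtain ⟨hlt1, hlt2⟩ := abs_lt.mp (key t ht)
    refine ⟨by simp [Complex.norm_exp], ?_, ?_⟩
    · rw [hα t ht]
      exact exp_ne_of_between _ _ (by linarith) (by linarith)
    · rw [hβ t ht]
      exact exp_ne_of_between _ _ (by linarith) (by linarith)
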